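/- Let θ ∈ (0, 1/2], let n ≥ 2 be an integer, and let v ∈ S_{T[θ,S_n]} with basis expansion v = Σ_i v_i e_i be such that v₁ = 0. If min( ‖v + y‖ , ‖v − y‖ ) ≤ θ · (⌊θ⁻¹⌋ + 1) for all y ∈ S_{T[θ,S_n]}, then v = ε e_m for some ε ∈ {−1, 1} and some integer m > 1. -/

import Mathlib

open scoped BigOperators

noncomputable section

/-- Projection of a finitely supported vector onto the coordinates in `E`. -/
def tsProj (E : Finset ℕ+) (x : ℕ+ →₀ ℝ) : ℕ+ →₀ ℝ :=
  x.filter fun i => i ∈ E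

/-- The Schreier families `S_n` on the positive integers:
`S₁` consists of the sets `F` with `|F| ≤ min F` (together with `∅`), and `S_{n+1}`
consists of unions `F₁ ∪ ⋯ ∪ F_d` of nonempty members `F₁ < ⋯ < F_d` of `S_n`
with `d ≤ min F₁` (together with `∅`). -/
def Schreier : ℕ → Set (Finset ℕ+)
  | 0 => {F | F.card ≤ 1}
  | 1 => {F | ∀ a ∈ F, F.card ≤ (a : ℕ)}
  | n + 2 =>
      {F | F = ∅ ∨
        ∃ (d : ℕ) (G : Fin d → Finset ℕ+),
          0 < d ∧ (∀ i, G i ∈ Schreier (n + 1)) ∧ (∀ i, (G i).Nonempty) ∧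
          (∀ i j : Fin d, i < j → ∀ a ∈ G i, ∀ b ∈ G j, a < b) ∧
          (∀ i, ∀ a ∈ G i, d ≤ (a : ℕ)) ∧ F = Finset.univ.biUnion G}

/-- A tuple of nonempty finite sets `E 0 < E 1 < ⋯` whose set of minima belongs to `S`. -/
def TsAdmissible (S : Set (Finset ℕ+)) {d : ℕ} (E : Fin d → Finset ℕ+) : Prop :=
  (∀ i, (E i).Nonempty) ∧
  (∀ i j : Fin d, i < j → ∀ a ∈ E i, ∀ b ∈ E j, a < b) ∧
  ∃ μ : Fin d → ℕ+, (∀ i, IsLeast (↑(E i) : Set ℕ+) (μ i)) ∧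
    Finset.univ.image μ ∈ S

/-- The iterated norms `‖·‖_m` in the construction of the Tsirelson norm:
`‖x‖₀` is the supremum norm and
`‖x‖_{m+1} = max(‖x‖_m, sup{θ ∑ᵢ ‖Eᵢ x‖_m : E₁ < ⋯ < E_d, {min Eᵢ} ∈ S})`. -/
def tnormAux (θ : ℝ) (S : Set (Finset ℕ+)) : ℕ → (ℕ+ →₀ ℝ) → ℝ
  | 0, x => ⨆ i, |x i|
  | m + 1, x =>
      max (tnormAux θ S m x)
        (sSup {r : ℝ | ∃ (d : ℕ) (E : Fin d → Finset ℕ+), TsAdmissible S E ∧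
          r = θ * ∑ i, tnormAux θ S m (tsProj (E i) x)})

/-- The Tsirelson norm `‖x‖_{θ,S} = sup_m ‖x‖_m` on `c₀₀`. -/
def tnorm (θ : ℝ) (S : Set (Finset ℕ+)) (x : ℕ+ →₀ ℝ) : ℝ :=
  ⨆ m : ℕ, tnormAux θ S m x

/-- `X`, together with the sequence `e` of unit vectors, is (a realization of) the
Tsirelson space `T[θ, S_n]`: a Banach space containing `c₀₀` isometrically
(w.r.t. the Tsirelson norm) as a dense subspace, in which `(e i)` is a
(1-unconditional) basis, i.e. every `x` has a unique expansion `x = ∑ᵢ aᵢ eᵢ`. -/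
structure IsTsirelsonSpace (θ : ℝ) (n : ℕ) (X : Type*) [NormedAddCommGroup X]
    [NormedSpace ℝ X] (e : ℕ+ → X) : Prop where
  complete : CompleteSpace X
  norm_embed : ∀ a : ℕ+ →₀ ℝ, ‖a.sum fun i c => c • e i‖ = tnorm θ (Schreier n) a
  dense_embed : DenseRange fun a : ℕ+ →₀ ℝ => a.sum fun i c => c • e i
  expansion : ∀ x : X, ∃! a : ℕ+ → ℝ, HasSum (fun i => a i • e i) x

namespace TsirelsonProof
open Finsupp Finset

def l1 (x : ℕ+ →₀ ℝ) : ℝ := ∑ i ∈ x.support, |x i|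

lemma l1_nonneg (x : ℕ+ →₀ ℝ) : 0 ≤ l1 x :=
  Finset.sum_nonneg fun _ _ => abs_nonneg _

lemma abs_le_l1 (x : ℕ+ →₀ ℝ) (i : ℕ+) : |x i| ≤ l1 x := by
  by_cases h : i ∈ x.support
  · exact Finset.single_le_sum (f := fun j => |x j|) (fun _ _ => abs_nonneg _) h
  · rw [Finsupp.notMem_support_iff.mp h, abs_zero]; exact l1_nonneg x

lemma bdd0 (x : ℕ+ →₀ ℝ) : BddAbove (Set.range fun i => |x i|) :=
  ⟨l1 x, by rintro r ⟨i, rfl⟩; exact abs_le_l1 x i⟩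

lemma tsProj_apply (E : Finset ℕ+) (x : ℕ+ →₀ ℝ) (i : ℕ+) :
    tsProj E x i = if i ∈ E then x i else 0 := by
  simp [tsProj, Finsupp.filter_apply]

lemma l1_tsProj_le (E : Finset ℕ+) (x : ℕ+ →₀ ℝ) : l1 (tsProj E x) ≤ l1 x := by
  unfold l1
  have hsub : (tsProj E x).support ⊆ x.support := by
    rw [tsProj, Finsupp.support_filter]
    exact Finset.filter_subset _ _
  refine le_trans (Finset.sum_le_sum_of_subset_of_nonneg hsub
    (fun _ _ _ => abs_nonneg _)) ?_
  refine Finset.sum_le_sum fun j hj => ?_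
  rw [tsProj_apply]
  by_cases h : j ∈ E <;> simp [h, abs_nonneg]

lemma ord_disjoint {d : ℕ} {E : Fin d → Finset ℕ+}
    (hord : ∀ i j : Fin d, i < j → ∀ a ∈ E i, ∀ b ∈ E j, a < b)
    {i j : Fin d} (hij : i ≠ j) : Disjoint (E i) (E j) := by
  rw [Finset.disjoint_left]
  intro a hai haj
  rcases lt_or_gt_of_ne hij with hlt | hlt
  · exact lt_irrefl a (hord i j hlt a hai a haj)
  · exact lt_irrefl a (hord j i hlt a haj a hai)

lemma sum_l1_proj_le {d : ℕ} (E : Fin d → Finset ℕ+) (x : ℕ+ →₀ ℝ)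
    (hord : ∀ i j : Fin d, i < j → ∀ a ∈ E i, ∀ b ∈ E j, a < b) :
    ∑ i, l1 (tsProj (E i) x) ≤ l1 x := by
  have h1 : ∀ i : Fin d, l1 (tsProj (E i) x) = ∑ j ∈ (x.support ∩ E i), |x j| := by
    intro i
    unfold l1
    rw [tsProj, Finsupp.support_filter]
    refine Finset.sum_congr (by ext j; simp [Finset.mem_filter, Finset.mem_inter, and_comm])
      fun j hj => ?_
    rw [Finset.mem_inter] at hj
    rw [← tsProj, tsProj_apply, if_pos hj.2]
  calc ∑ i, l1 (tsProj (E i) x) = ∑ i, ∑ j ∈ (x.support ∩ E i), |x j| := by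
        exact Finset.sum_congr rfl fun i _ => h1 i
    _ = ∑ j ∈ Finset.univ.biUnion (fun i => x.support ∩ E i), |x j| := by
        refine (Finset.sum_biUnion ?_).symm
        intro i _ j _ hij
        exact Finset.disjoint_of_subset_left (Finset.inter_subset_right)
          (Finset.disjoint_of_subset_right (Finset.inter_subset_right)
            (ord_disjoint hord hij))
    _ ≤ l1 x := by
        refine Finset.sum_le_sum_of_subset_of_nonneg ?_ (fun _ _ _ => abs_nonneg _)
        intro j hj
        rcases Finset.mem_biUnion.mp hj with ⟨i, _, hji⟩
        exact (Finset.mem_inter.mp hji).1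

section
variable {θ : ℝ} {S : Set (Finset ℕ+)}

lemma tnormAux_le_l1 (hθ0 : 0 ≤ θ) (hθ1 : θ ≤ 1) :
    ∀ (m : ℕ) (x : ℕ+ →₀ ℝ), tnormAux θ S m x ≤ l1 x := by
  intro m
  induction m with
  | zero => intro x; exact ciSup_le (abs_le_l1 x)
  | succ m IH =>
    intro x
    rw [tnormAux]
    refine max_le (IH x) (Real.sSup_le ?_ (l1_nonneg x))
    rintro r ⟨d, E, hE, rfl⟩
    calc θ * ∑ i, tnormAux θ S m (tsProj (E i) x)
        ≤ θ * ∑ i, l1 (tsProj (E i) x) := by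
          apply mul_le_mul_of_nonneg_left (Finset.sum_le_sum fun i _ => IH _) hθ0
      _ ≤ θ * l1 x := mul_le_mul_of_nonneg_left (sum_l1_proj_le E x hE.2.1) hθ0
      _ ≤ 1 * l1 x := mul_le_mul_of_nonneg_right hθ1 (l1_nonneg x)
      _ = l1 x := one_mul _

lemma tnormAux_succ_ge (m : ℕ) (x : ℕ+ →₀ ℝ) :
    tnormAux θ S m x ≤ tnormAux θ S (m + 1) x := by
  rw [tnormAux]; exact le_max_left _ _

lemma tnormAux_mono {m m' : ℕ} (h : m ≤ m') (x : ℕ+ →₀ ℝ) :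
    tnormAux θ S m x ≤ tnormAux θ S m' x := by
  induction m' with
  | zero => simp_all
  | succ k IH =>
    rcases Nat.lt_or_ge m (k+1) with hk | hk
    · exact le_trans (IH (Nat.lt_succ_iff.mp hk)) (tnormAux_succ_ge k x)
    · have : m = k + 1 := le_antisymm h hk
      subst this; rfl

lemma tnormAux_nonneg (m : ℕ) (x : ℕ+ →₀ ℝ) : 0 ≤ tnormAux θ S m x := by
  refine le_trans ?_ (tnormAux_mono (Nat.zero_le m) x)
  have : |x 1| ≤ tnormAux θ S 0 x := le_ciSup (bdd0 x) 1
  exact le_trans (abs_nonneg _) this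

lemma bddAbove_range_tnormAux (hθ0 : 0 ≤ θ) (hθ1 : θ ≤ 1) (x : ℕ+ →₀ ℝ) :
    BddAbove (Set.range fun m => tnormAux θ S m x) :=
  ⟨l1 x, by rintro r ⟨m, rfl⟩; exact tnormAux_le_l1 hθ0 hθ1 m x⟩

lemma tnormAux_le_tnorm (hθ0 : 0 ≤ θ) (hθ1 : θ ≤ 1) (m : ℕ) (x : ℕ+ →₀ ℝ) :
    tnormAux θ S m x ≤ tnorm θ S x :=
  le_ciSup (bddAbove_range_tnormAux hθ0 hθ1 x) m

lemma tnorm_le_l1 (hθ0 : 0 ≤ θ) (hθ1 : θ ≤ 1) (x : ℕ+ →₀ ℝ) :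
    tnorm θ S x ≤ l1 x :=
  ciSup_le (tnormAux_le_l1 hθ0 hθ1 · x)

lemma tnorm_nonneg (hθ0 : 0 ≤ θ) (hθ1 : θ ≤ 1) (x : ℕ+ →₀ ℝ) : 0 ≤ tnorm θ S x :=
  le_trans (tnormAux_nonneg 0 x) (tnormAux_le_tnorm hθ0 hθ1 0 x)

lemma bddAbove_tset (hθ0 : 0 ≤ θ) (hθ1 : θ ≤ 1) (m : ℕ) (x : ℕ+ →₀ ℝ) :
    BddAbove {r : ℝ | ∃ (d : ℕ) (E : Fin d → Finset ℕ+), TsAdmissible S E ∧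
      r = θ * ∑ i, tnormAux θ S m (tsProj (E i) x)} := by
  refine ⟨l1 x, ?_⟩
  rintro r ⟨d, E, hE, rfl⟩
  calc θ * ∑ i, tnormAux θ S m (tsProj (E i) x)
      ≤ θ * ∑ i, l1 (tsProj (E i) x) :=
        mul_le_mul_of_nonneg_left (Finset.sum_le_sum fun i _ => tnormAux_le_l1 hθ0 hθ1 _ _) hθ0
    _ ≤ θ * l1 x := mul_le_mul_of_nonneg_left (sum_l1_proj_le E x hE.2.1) hθ0
    _ ≤ 1 * l1 x := mul_le_mul_of_nonneg_right hθ1 (l1_nonneg x)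
    _ = l1 x := one_mul _

lemma le_tnormAux_succ (hθ0 : 0 ≤ θ) (hθ1 : θ ≤ 1) (m : ℕ) (x : ℕ+ →₀ ℝ)
    {d : ℕ} {E : Fin d → Finset ℕ+} (hE : TsAdmissible S E) :
    θ * ∑ i, tnormAux θ S m (tsProj (E i) x) ≤ tnormAux θ S (m + 1) x := by
  rw [tnormAux]
  exact le_max_of_le_right (le_csSup (bddAbove_tset hθ0 hθ1 m x) ⟨d, E, hE, rfl⟩)

lemma tsProj_add (E : Finset ℕ+) (x y : ℕ+ →₀ ℝ) :
    tsProj E (x + y) = tsProj E x + tsProj E y := Finsupp.filter_add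

lemma tnormAux_add_le (hθ0 : 0 ≤ θ) (hθ1 : θ ≤ 1) :
    ∀ (m : ℕ) (x y : ℕ+ →₀ ℝ), tnormAux θ S m (x + y) ≤ tnormAux θ S m x + tnormAux θ S m y := by
  intro m
  induction m with
  | zero =>
    intro x y
    refine ciSup_le fun i => ?_
    calc |(x + y) i| = |x i + y i| := by rw [Finsupp.add_apply]
      _ ≤ |x i| + |y i| := abs_add_le _ _
      _ ≤ _ := add_le_add (le_ciSup (bdd0 x) i) (le_ciSup (bdd0 y) i)
  | succ m IH =>
    intro x y
    rw [tnormAux]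
    refine max_le (le_trans (IH x y)
      (add_le_add (tnormAux_succ_ge m x) (tnormAux_succ_ge m y)))
      (Real.sSup_le ?_ (add_nonneg (tnormAux_nonneg _ x) (tnormAux_nonneg _ y)))
    rintro r ⟨d, E, hE, rfl⟩
    calc θ * ∑ i, tnormAux θ S m (tsProj (E i) (x + y))
        = θ * ∑ i, tnormAux θ S m (tsProj (E i) x + tsProj (E i) y) := by
          simp only [tsProj_add]
      _ ≤ θ * ∑ i, (tnormAux θ S m (tsProj (E i) x) + tnormAux θ S m (tsProj (E i) y)) :=
          mul_le_mul_of_nonneg_left (Finset.sum_le_sum fun i _ => IH _ _) hθ0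
      _ = θ * ∑ i, tnormAux θ S m (tsProj (E i) x)
            + θ * ∑ i, tnormAux θ S m (tsProj (E i) y) := by
          rw [Finset.sum_add_distrib, mul_add]
      _ ≤ _ := add_le_add (le_tnormAux_succ hθ0 hθ1 m x hE) (le_tnormAux_succ hθ0 hθ1 m y hE)

lemma tnormAux_zero (hθ0 : 0 ≤ θ) (hθ1 : θ ≤ 1) (m : ℕ) :
    tnormAux θ S m (0 : ℕ+ →₀ ℝ) = 0 := by
  refine le_antisymm ?_ (tnormAux_nonneg m 0)
  refine le_trans (tnormAux_le_l1 hθ0 hθ1 m 0) ?_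
  simp [l1]

lemma tsProj_single (E : Finset ℕ+) (p : ℕ+) (c : ℝ) :
    tsProj E (Finsupp.single p c) =
      if p ∈ E then Finsupp.single p c else 0 := by
  ext i
  rw [tsProj_apply]
  by_cases hi : i ∈ E <;> by_cases hip : i = p
  · subst hip; simp [hi]
  · simp [hi, hip, Finsupp.single_apply, Ne.symm hip]
    split <;> simp [Finsupp.single_apply, Ne.symm hip]
  · subst hip; simp [hi, Finsupp.single_apply]
  · simp [hi, hip]
    split <;> simp [Finsupp.single_apply, Ne.symm hip]

lemma sum_ite_mem_le {d : ℕ} {E : Fin d → Finset ℕ+}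
    (hord : ∀ i j : Fin d, i < j → ∀ a ∈ E i, ∀ b ∈ E j, a < b)
    (p : ℕ+) {c : ℝ} (hc : 0 ≤ c) :
    (∑ i : Fin d, if p ∈ E i then c else 0) ≤ c := by
  by_cases hex : ∃ i, p ∈ E i
  · obtain ⟨i₀, hi₀⟩ := hex
    have : ∀ i : Fin d, (if p ∈ E i then c else 0) ≤ if i = i₀ then c else 0 := by
      intro i
      by_cases hi : p ∈ E i
      · have : i = i₀ := by
          by_contra hne
          exact (Finset.disjoint_left.mp (ord_disjoint hord hne) hi) hi₀
        simp [hi, this, hi₀]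
      · simp [hi]; split <;> simp [hc]
    refine le_trans (Finset.sum_le_sum fun i _ => this i) ?_
    simp
  · push_neg at hex
    simp [hex, hc]

lemma tnormAux_single_le (hθ0 : 0 ≤ θ) (hθ1 : θ ≤ 1) (m : ℕ) (p : ℕ+) (c : ℝ) :
    tnormAux θ S m (Finsupp.single p c) ≤ |c| := by
  induction m with
  | zero =>
    refine ciSup_le fun i => ?_
    rw [Finsupp.single_apply]
    split <;> simp [abs_nonneg]
  | succ m IH =>
    rw [tnormAux]
    refine max_le IH (Real.sSup_le ?_ (abs_nonneg c))
    rintro r ⟨d, E, hE, rfl⟩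
    have hterm : ∀ i : Fin d, tnormAux θ S m (tsProj (E i) (Finsupp.single p c))
        ≤ if p ∈ E i then |c| else 0 := by
      intro i
      rw [tsProj_single]
      split
      · exact IH
      · rw [tnormAux_zero hθ0 hθ1]
    calc θ * ∑ i, tnormAux θ S m (tsProj (E i) (Finsupp.single p c))
        ≤ θ * ∑ i : Fin d, (if p ∈ E i then |c| else 0) :=
          mul_le_mul_of_nonneg_left (Finset.sum_le_sum fun i _ => hterm i) hθ0
      _ ≤ θ * |c| :=
          mul_le_mul_of_nonneg_left (sum_ite_mem_le hE.2.1 p (abs_nonneg c)) hθ0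
      _ ≤ 1 * |c| := mul_le_mul_of_nonneg_right hθ1 (abs_nonneg c)
      _ = |c| := one_mul _

lemma abs_le_tnormAux0 (x : ℕ+ →₀ ℝ) (i : ℕ+) : |x i| ≤ tnormAux θ S 0 x :=
  le_ciSup (bdd0 x) i

lemma tnorm_single (hθ0 : 0 ≤ θ) (hθ1 : θ ≤ 1) (p : ℕ+) (c : ℝ) :
    tnorm θ S (Finsupp.single p c) = |c| := by
  refine le_antisymm (ciSup_le fun m => tnormAux_single_le hθ0 hθ1 m p c) ?_
  refine le_trans ?_ (tnormAux_le_tnorm hθ0 hθ1 0 _)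
  have := abs_le_tnormAux0 (S := S) (θ := θ) (Finsupp.single p c) p
  simpa using this

lemma tnorm_le_max (hθ0 : 0 ≤ θ) (hθ1 : θ ≤ 1) (x : ℕ+ →₀ ℝ) :
    tnorm θ S x ≤ max (tnormAux θ S 0 x) (θ * l1 x) := by
  refine ciSup_le fun m => ?_
  induction m with
  | zero => exact le_max_left _ _
  | succ m IH =>
    rw [tnormAux]
    refine max_le IH (le_max_of_le_right ?_)
    refine Real.sSup_le ?_ (mul_nonneg hθ0 (l1_nonneg x))
    rintro r ⟨d, E, hE, rfl⟩
    refine mul_le_mul_of_nonneg_left ?_ hθ0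
    refine le_trans (Finset.sum_le_sum fun i _ => tnormAux_le_l1 hθ0 hθ1 m _) ?_
    exact sum_l1_proj_le E x hE.2.1

lemma tnormAux_le_erase (hθ0 : 0 ≤ θ) (hθ1 : θ ≤ 1) :
    ∀ (m : ℕ) (x : ℕ+ →₀ ℝ) (p : ℕ+),
      tnormAux θ S m x ≤ max |x p| (θ * |x p| + tnorm θ S (x.erase p)) := by
  intro m
  induction m with
  | zero =>
    intro x p
    refine ciSup_le fun i => ?_
    by_cases hip : i = p
    · subst hip; exact le_max_left _ _
    · refine le_max_of_le_right ?_
      have h1 : x i = (x.erase p) i := (Finsupp.erase_ne hip).symm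
      rw [h1]
      refine le_add_of_nonneg_of_le (mul_nonneg hθ0 (abs_nonneg _)) ?_
      exact le_trans (abs_le_tnormAux0 _ i) (tnormAux_le_tnorm hθ0 hθ1 0 _)
  | succ m IH =>
    intro x p
    rw [tnormAux]
    refine max_le (IH x p) (Real.sSup_le ?_ (le_trans (abs_nonneg _) (le_max_left _ _)))
    rintro r ⟨d, E, hE, rfl⟩
    refine le_max_of_le_right ?_
    have hsplit : ∀ i : Fin d, tnormAux θ S m (tsProj (E i) x) ≤
        tnormAux θ S m (tsProj (E i) (x.erase p)) + (if p ∈ E i then |x p| else 0) := by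
      intro i
      conv_lhs => rw [← Finsupp.erase_add_single p x]
      rw [tsProj_add]
      refine le_trans (tnormAux_add_le hθ0 hθ1 m _ _) ?_
      refine add_le_add le_rfl ?_
      rw [tsProj_single]
      split
      · exact tnormAux_single_le hθ0 hθ1 m p (x p)
      · rw [tnormAux_zero hθ0 hθ1]
    calc θ * ∑ i, tnormAux θ S m (tsProj (E i) x)
        ≤ θ * ∑ i : Fin d, (tnormAux θ S m (tsProj (E i) (x.erase p))
            + (if p ∈ E i then |x p| else 0)) :=
          mul_le_mul_of_nonneg_left (Finset.sum_le_sum fun i _ => hsplit i) hθ0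
      _ = θ * ∑ i, tnormAux θ S m (tsProj (E i) (x.erase p))
            + θ * ∑ i : Fin d, (if p ∈ E i then |x p| else 0) := by
          rw [Finset.sum_add_distrib, mul_add]
      _ ≤ tnorm θ S (x.erase p) + θ * |x p| := by
          refine add_le_add ?_
            (mul_le_mul_of_nonneg_left (sum_ite_mem_le hE.2.1 p (abs_nonneg _)) hθ0)
          exact le_trans (le_tnormAux_succ hθ0 hθ1 m _ hE)
            (tnormAux_le_tnorm hθ0 hθ1 (m+1) _)
      _ = θ * |x p| + tnorm θ S (x.erase p) := by ring

lemma tnorm_le_erase (hθ0 : 0 ≤ θ) (hθ1 : θ ≤ 1) (x : ℕ+ →₀ ℝ) (p : ℕ+) :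
    tnorm θ S x ≤ max |x p| (θ * |x p| + tnorm θ S (x.erase p)) :=
  ciSup_le fun m => tnormAux_le_erase hθ0 hθ1 m x p

end

lemma schreier_mono : ∀ m : ℕ, 1 ≤ m → Schreier m ⊆ Schreier (m + 1) := by
  intro m
  induction m with
  | zero => intro h; omega
  | succ k IH =>
    intro _ F hF
    match k with
    | 0 =>
      show F ∈ Schreier 2
      rcases Finset.eq_empty_or_nonempty F with rfl | hne
      · exact Or.inl rfl
      · refine Or.inr ⟨1, fun _ => F, one_pos, fun _ => hF, fun _ => hne, ?_, ?_, ?_⟩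
        · intro i j hij; omega
        · intro i a _; exact a.one_le
        · ext x; simp
    | k + 1 =>
      show F ∈ Schreier (k + 3)
      rcases hF with rfl | ⟨d, G, hd, hG, hne, hord, hmin, rfl⟩
      · exact Or.inl rfl
      · exact Or.inr ⟨d, G, hd, fun i => IH (by omega) (hG i), hne, hord, hmin, rfl⟩

lemma schreier_le {m m' : ℕ} (h1 : 1 ≤ m) (h : m ≤ m') : Schreier m ⊆ Schreier m' := by
  induction m' with
  | zero => have : m = 0 := by omega
            subst this; exact fun _ h => h
  | succ k IH =>
    rcases Nat.lt_or_ge m (k+1) with hk | hk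
    · exact (IH (by omega)).trans (schreier_mono k (by omega))
    · have : m = k + 1 := by omega
      subst this; exact fun _ h => h

lemma schreier_union_pair {A B : Finset ℕ+} (hA : A ∈ Schreier 1) (hB : B ∈ Schreier 1)
    (hAne : A.Nonempty) (hBne : B.Nonempty)
    (hAB : ∀ a ∈ A, ∀ b ∈ B, a < b) (hA2 : ∀ a ∈ A, 2 ≤ (a : ℕ))
    {n : ℕ} (hn : 2 ≤ n) : A ∪ B ∈ Schreier n := by
  refine schreier_le (by omega) hn ?_
  show A ∪ B ∈ Schreier 2
  refine Or.inr ⟨2, ![A, B], two_pos, ?_, ?_, ?_, ?_, ?_⟩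
  · intro i; fin_cases i <;> simpa
  · intro i; fin_cases i <;> simpa
  · intro i j hij a ha b hb
    fin_cases i <;> fin_cases j
    · exact absurd hij (by decide)
    · exact hAB a (by simpa using ha) b (by simpa using hb)
    · exact absurd hij (by decide)
    · exact absurd hij (by decide)
  · intro i a ha
    fin_cases i
    · exact hA2 a (by simpa using ha)
    · obtain ⟨a₀, ha₀⟩ := hAne
      have h := hAB a₀ ha₀ a (by simpa using ha)
      exact le_trans (hA2 a₀ ha₀) (le_of_lt (by exact_mod_cast h))
  · ext x; simp [Fin.exists_fin_two]

def gfun (P : ℕ+) (k : ℕ) : ℕ+ := P + ⟨k + 1, Nat.succ_pos k⟩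

lemma gfun_coe (P : ℕ+) (k : ℕ) : (gfun P k : ℕ) = (P : ℕ) + k + 1 := by
  simp [gfun]; rfl

lemma gfun_strictMono (P : ℕ+) {k l : ℕ} (h : k < l) : gfun P k < gfun P l := by
  rw [← PNat.coe_lt_coe, gfun_coe, gfun_coe]; omega

lemma gfun_inj (P : ℕ+) : Function.Injective (gfun P) := by
  intro k l h
  have := congrArg (fun x : ℕ+ => (x : ℕ)) h
  simp only [gfun_coe] at this; omega

lemma P_lt_gfun (P : ℕ+) (k : ℕ) : P < gfun P k := by
  rw [← PNat.coe_lt_coe, gfun_coe]; omega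

def Ffin (P : ℕ+) (N : ℕ) : Finset ℕ+ := (Finset.range (N + 1)).image (gfun P)

lemma mem_Ffin {P : ℕ+} {N : ℕ} {i : ℕ+} :
    i ∈ Ffin P N ↔ ∃ k, k < N + 1 ∧ gfun P k = i := by
  simp [Ffin, Finset.mem_image, Finset.mem_range]

lemma gfun_mem_Ffin {P : ℕ+} {N k : ℕ} (hk : k < N + 1) : gfun P k ∈ Ffin P N :=
  mem_Ffin.mpr ⟨k, hk, rfl⟩

lemma Ffin_schreier1 {P : ℕ+} {N : ℕ} (hPN : N + 1 ≤ (P : ℕ)) :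
    Ffin P N ∈ Schreier 1 := by
  intro a ha
  rcases mem_Ffin.mp ha with ⟨k, hk, rfl⟩
  calc (Ffin P N).card ≤ N + 1 := le_trans Finset.card_image_le (by simp)
    _ ≤ (P : ℕ) := hPN
    _ ≤ (gfun P k : ℕ) := by rw [gfun_coe]; omega

def flatVec (F : Finset ℕ+) (c : ℝ) : ℕ+ →₀ ℝ :=
  Finsupp.onFinset F (fun i => if i ∈ F then c else 0)
    (fun i h => by by_contra hh; simp [hh] at h)

lemma flatVec_apply (F : Finset ℕ+) (c : ℝ) (i : ℕ+) :
    flatVec F c i = if i ∈ F then c else 0 := rfl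

lemma singletons_admissible (P : ℕ+) (N : ℕ) (hPN : N + 1 ≤ (P : ℕ))
    {n : ℕ} (hn : 1 ≤ n) :
    TsAdmissible (Schreier n) (fun k : Fin (N + 1) => ({gfun P k} : Finset ℕ+)) := by
  refine ⟨fun k => ⟨gfun P k, Finset.mem_singleton_self _⟩, ?_, ?_⟩
  · intro i j hij a ha b hb
    rw [Finset.mem_singleton] at ha hb
    subst ha; subst hb
    exact gfun_strictMono P hij
  · refine ⟨fun k => gfun P k, fun k => ⟨Finset.mem_singleton_self _, ?_⟩, ?_⟩
    · intro b hb; rw [Finset.mem_coe, Finset.mem_singleton] at hb; exact le_of_eq hb.symm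
    · have himg : (Finset.univ.image fun k : Fin (N + 1) => gfun P k) = Ffin P N := by
        ext i
        simp only [Finset.mem_image, Finset.mem_univ, true_and, mem_Ffin]
        constructor
        · rintro ⟨k, rfl⟩; exact ⟨k.val, k.isLt, rfl⟩
        · rintro ⟨k, hk, rfl⟩; exact ⟨⟨k, hk⟩, rfl⟩
      rw [himg]
      exact schreier_le le_rfl hn (Ffin_schreier1 hPN)

lemma tnormAux_single_ge {θ : ℝ} {S : Set (Finset ℕ+)} (m : ℕ) (p : ℕ+) (c : ℝ) :
    |c| ≤ tnormAux θ S m (Finsupp.single p c) := by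
  refine le_trans ?_ (tnormAux_mono (Nat.zero_le m) _)
  have := abs_le_tnormAux0 (θ := θ) (S := S) (Finsupp.single p c) p
  simpa using this

lemma tsProj_singleton_mem (j : ℕ+) (x : ℕ+ →₀ ℝ) :
    tsProj ({j} : Finset ℕ+) x = Finsupp.single j (x j) := by
  ext i
  rw [tsProj_apply, Finsupp.single_apply]
  by_cases h : i = j
  · subst h; simp
  · rw [if_neg (by simp [h]), if_neg (Ne.symm h)]

lemma tnorm_flat (hθ0 : 0 < θ) (hθ1 : θ ≤ 1) {n : ℕ} (hn : 1 ≤ n)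
    (P : ℕ+) (N : ℕ) (hPN : N + 1 ≤ (P : ℕ)) {c : ℝ} (hc0 : 0 ≤ c)
    (hc : θ * (N + 1) * c = 1) (hc1 : c ≤ 1) :
    tnorm θ (Schreier n) (flatVec (Ffin P N) c) = 1 := by
  set F := Ffin P N
  set y := flatVec F c with hy
  refine le_antisymm ?_ ?_
  · refine le_trans (tnorm_le_max hθ0.le hθ1 y) ?_
    have h0 : tnormAux θ (Schreier n) 0 y ≤ c := by
      refine ciSup_le fun i => ?_
      rw [flatVec_apply]
      split <;> simp [abs_of_nonneg hc0, hc0]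
    have hl1 : l1 y ≤ (N + 1) * c := by
      have hsupp : y.support ⊆ F := Finsupp.support_onFinset_subset
      calc l1 y = ∑ i ∈ y.support, |y i| := rfl
        _ ≤ ∑ i ∈ F, |y i| :=
            Finset.sum_le_sum_of_subset_of_nonneg hsupp (fun _ _ _ => abs_nonneg _)
        _ ≤ ∑ _i ∈ F, c := by
            refine Finset.sum_le_sum fun i hi => ?_
            rw [flatVec_apply, if_pos hi, abs_of_nonneg hc0]
        _ = F.card * c := by rw [Finset.sum_const, nsmul_eq_mul]
        _ ≤ (N + 1) * c := by
            refine mul_le_mul_of_nonneg_right ?_ hc0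
            have hcard : F.card ≤ N + 1 := by
              have h := Finset.card_image_le (s := Finset.range (N + 1)) (f := gfun P)
              simpa [F, Ffin] using h
            exact_mod_cast hcard
    refine max_le (le_trans h0 hc1) ?_
    calc θ * l1 y ≤ θ * ((N + 1) * c) := mul_le_mul_of_nonneg_left hl1 hθ0.le
      _ = 1 := by rw [← mul_assoc]; exact hc
  · have hadm := singletons_admissible P N hPN hn
    have hr := le_tnormAux_succ (S := Schreier n) hθ0.le hθ1 0 y hadm
    refine le_trans ?_ (le_trans hr (tnormAux_le_tnorm hθ0.le hθ1 1 y))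
    have hterm : ∀ k : Fin (N + 1),
        c ≤ tnormAux θ (Schreier n) 0 (tsProj ({gfun P k} : Finset ℕ+) y) := by
      intro k
      rw [tsProj_singleton_mem]
      have : y (gfun P k) = c := by
        rw [hy, flatVec_apply, if_pos (gfun_mem_Ffin k.isLt)]
      rw [this]
      have := tnormAux_single_ge (θ := θ) (S := Schreier n) 0 (gfun P k) c
      rwa [abs_of_nonneg hc0] at this
    have hsum : (∑ _k : Fin (N + 1), c) = (N + 1 : ℝ) * c := by
      rw [Finset.sum_const, Finset.card_univ, Fintype.card_fin, nsmul_eq_mul]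
      push_cast; ring
    calc (1 : ℝ) = θ * ∑ _k : Fin (N + 1), c := by rw [hsum, ← mul_assoc, hc]
      _ ≤ θ * ∑ k : Fin (N + 1), tnormAux θ (Schreier n) 0
            (tsProj ({gfun P k} : Finset ℕ+) y) :=
          mul_le_mul_of_nonneg_left (Finset.sum_le_sum fun k _ => hterm k) hθ0.le

lemma pnat_coe_add_one (p : ℕ+) : ((p + 1 : ℕ+) : ℕ) = (p : ℕ) + 1 := by
  simp

lemma key_lower {θ : ℝ} (hθ0 : 0 < θ) (hθ1 : θ ≤ 1) {n : ℕ} (hn : 2 ≤ n)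
    (p q P : ℕ+) (N : ℕ) (hpq : p < q) (hp2 : 2 ≤ (p : ℕ)) (hqP : q ≤ P)
    (hPN : N + 1 ≤ (P : ℕ)) {c : ℝ} (hc0 : 0 ≤ c) (hc : θ * (N + 1) * c = 1)
    (b z : ℕ+ →₀ ℝ)
    (hblow : ∀ i : ℕ+, i < p → b i = 0)
    (hbhigh : ∀ i : ℕ+, P < i → b i = 0)
    (hz : ∀ i : ℕ+, i ≤ P → z i = b i)
    (hzF : ∀ k : ℕ, k < N + 1 → |z (gfun P k)| = c) :
    θ * (|b p| + tnorm θ (Schreier n) (b.erase p)) + 1 ≤ tnorm θ (Schreier n) z := by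
  have hpP : p < P := lt_of_lt_of_le hpq hqP
  have hpP' : (p : ℕ) < (P : ℕ) := (PNat.coe_lt_coe _ _).mpr hpP
  set S := Schreier n
  set E : Fin (N + 3) → Finset ℕ+ := fun i =>
    if (i : ℕ) = 0 then {p} else if (i : ℕ) = 1 then Finset.Ioc p P
    else {gfun P ((i : ℕ) - 2)} with hE
  -- projection facts
  have hproj1 : tsProj (Finset.Ioc p P) z = b.erase p := by
    ext i
    rw [tsProj_apply]
    by_cases hip : i = p
    · subst hip
      rw [Finsupp.erase_same, if_neg (by simp [Finset.mem_Ioc])]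
    · rw [Finsupp.erase_ne hip]
      by_cases hmem : i ∈ Finset.Ioc p P
      · rw [if_pos hmem]
        exact hz i (Finset.mem_Ioc.mp hmem).2
      · rw [if_neg hmem]
        rw [Finset.mem_Ioc] at hmem
        push_neg at hmem
        rcases lt_or_ge p i with hpi | hpi
        · exact (hbhigh i (hmem hpi)).symm
        · have : i < p := lt_of_le_of_ne hpi hip
          exact (hblow i this).symm
    -- admissibility
  have hEa : ∀ (i : Fin (N + 3)) (a : ℕ+), a ∈ E i →
      ((i : ℕ) = 0 ∧ a = p) ∨ ((i : ℕ) = 1 ∧ p < a ∧ a ≤ P) ∨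
      (2 ≤ (i : ℕ) ∧ a = gfun P ((i : ℕ) - 2)) := by
    intro i a ha
    by_cases h0 : (i : ℕ) = 0
    · left
      refine ⟨h0, ?_⟩
      rw [hE] at ha; simp only [h0] at ha; simpa using ha
    · by_cases h1 : (i : ℕ) = 1
      · right; left
        refine ⟨h1, ?_⟩
        rw [hE] at ha; simp only [h0, h1, if_false, if_true] at ha
        simpa [Finset.mem_Ioc] using ha
      · right; right
        refine ⟨by omega, ?_⟩
        rw [hE] at ha; simp only [h0, h1, if_false] at ha
        simpa using ha
  have hadm : TsAdmissible S E := by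
    refine ⟨?_, ?_, ?_⟩
    · intro i
      by_cases h0 : (i : ℕ) = 0
      · exact ⟨p, by rw [hE]; simp [h0]⟩
      · by_cases h1 : (i : ℕ) = 1
        · exact ⟨P, by rw [hE]; simp [h0, h1, Finset.mem_Ioc, hpP]⟩
        · exact ⟨gfun P ((i : ℕ) - 2), by rw [hE]; simp [h0, h1]⟩
    · intro i j hij a ha bb hb
      have hij' : (i : ℕ) < (j : ℕ) := hij
      rcases hEa i a ha with ⟨hi, rfl⟩ | ⟨hi, hpa, haP⟩ | ⟨hi, rfl⟩ <;>
        rcases hEa j bb hb with ⟨hj, rfl⟩ | ⟨hj, hpb, hbP⟩ | ⟨hj, rfl⟩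
      · omega
      · exact hpb
      · exact lt_trans hpP (P_lt_gfun P _)
      · omega
      · omega
      · exact lt_of_le_of_lt haP (P_lt_gfun P _)
      · omega
      · omega
      · exact gfun_strictMono P (by omega)
    · refine ⟨fun i => if (i : ℕ) = 0 then p else if (i : ℕ) = 1 then p + 1
        else gfun P ((i : ℕ) - 2), ?_, ?_⟩
      · intro i
        dsimp only
        by_cases h0 : (i : ℕ) = 0
        · refine ⟨?_, ?_⟩
          · rw [if_pos h0]
            exact Finset.mem_coe.mpr (by rw [hE]; simp [h0])
          · intro bb hb
            rcases hEa i bb (Finset.mem_coe.mp hb) with ⟨_, rfl⟩ | ⟨h1', _⟩ | ⟨h2', _⟩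
            · rw [if_pos h0]
            · omega
            · omega
        · by_cases h1 : (i : ℕ) = 1
          · refine ⟨?_, ?_⟩
            · rw [if_neg h0, if_pos h1]
              refine Finset.mem_coe.mpr ?_
              have : (p + 1 : ℕ+) ∈ Finset.Ioc p P := by
                rw [Finset.mem_Ioc]
                constructor
                · exact (PNat.coe_lt_coe _ _).mp (by rw [pnat_coe_add_one]; omega)
                · exact (PNat.coe_le_coe _ _).mp (by rw [pnat_coe_add_one]; omega)
              rw [hE]; simpa [h0, h1] using this
            · intro bb hb
              rcases hEa i bb (Finset.mem_coe.mp hb) with ⟨h0', _⟩ | ⟨_, hpb, hbP⟩ | ⟨h2', _⟩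
              · omega
              · rw [if_neg h0, if_pos h1]
                have hpb' := (PNat.coe_lt_coe _ _).mpr hpb
                exact (PNat.coe_le_coe _ _).mp (by rw [pnat_coe_add_one]; omega)
              · omega
          · refine ⟨?_, ?_⟩
            · rw [if_neg h0, if_neg h1]
              exact Finset.mem_coe.mpr (by rw [hE]; simp [h0, h1])
            · intro bb hb
              rcases hEa i bb (Finset.mem_coe.mp hb) with ⟨h0', _⟩ | ⟨h1', _⟩ | ⟨_, rfl⟩
              · omega
              · omega
              · rw [if_neg h0, if_neg h1]
      · have himg : (Finset.univ.image fun i : Fin (N + 3) =>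
            if (i : ℕ) = 0 then p else if (i : ℕ) = 1 then p + 1
            else gfun P ((i : ℕ) - 2)) = ({p, p + 1} : Finset ℕ+) ∪ Ffin P N := by
          ext a
          simp only [Finset.mem_image, Finset.mem_univ, true_and, Finset.mem_union,
            Finset.mem_insert, Finset.mem_singleton, mem_Ffin]
          constructor
          · rintro ⟨i, rfl⟩
            by_cases h0 : (i : ℕ) = 0
            · exact Or.inl (Or.inl (by simp [h0]))
            · by_cases h1 : (i : ℕ) = 1
              · exact Or.inl (Or.inr (by simp [h0, h1]))
              · exact Or.inr ⟨(i : ℕ) - 2, by omega, by simp [h0, h1]⟩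
          · rintro ((rfl | rfl) | ⟨k, hk, rfl⟩)
            · exact ⟨⟨0, by omega⟩, by simp⟩
            · exact ⟨⟨1, by omega⟩, by simp⟩
            · refine ⟨⟨k + 2, by omega⟩, by simp⟩
        rw [himg]
        refine schreier_union_pair ?_ (Ffin_schreier1 hPN) ⟨p, by simp⟩
          ⟨gfun P 0, gfun_mem_Ffin (by omega)⟩ ?_ ?_ hn
        · intro a ha
          have hcard : ({p, p + 1} : Finset ℕ+).card ≤ 2 :=
            le_trans (Finset.card_insert_le _ _) (by simp)
          simp only [Finset.mem_insert, Finset.mem_singleton] at ha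
          rcases ha with rfl | rfl
          · omega
          · rw [pnat_coe_add_one]; omega
        · intro a ha bb hb
          rcases mem_Ffin.mp hb with ⟨k, hk, rfl⟩
          simp only [Finset.mem_insert, Finset.mem_singleton] at ha
          rcases ha with rfl | rfl
          · exact lt_trans hpP (P_lt_gfun P k)
          · refine lt_of_le_of_lt ?_ (P_lt_gfun P k)
            exact (PNat.coe_le_coe _ _).mp (by rw [pnat_coe_add_one]; omega)
        · intro a ha
          simp only [Finset.mem_insert, Finset.mem_singleton] at ha
          rcases ha with rfl | rfl
          · omega
          · rw [pnat_coe_add_one]; omega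
  have main : ∀ m : ℕ,
      θ * (|b p| + tnormAux θ S m (b.erase p)) + 1 ≤ tnorm θ S z := by
    intro m
    have h0v : |b p| ≤ tnormAux θ S m (tsProj (E 0) z) := by
      have hEi : E 0 = {p} := by rw [hE]; simp
      rw [hEi, tsProj_singleton_mem, hz p (le_of_lt hpP)]
      exact tnormAux_single_ge m p (b p)
    have h1v : tnormAux θ S m (tsProj (E (Fin.succ 0)) z) = tnormAux θ S m (b.erase p) := by
      have hEi : E (Fin.succ (0 : Fin (N + 2))) = Finset.Ioc p P := by
        rw [hE]; simp [Fin.val_succ]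
      rw [hEi, hproj1]
    have h2v : ∀ k : Fin (N + 1), c ≤ tnormAux θ S m (tsProj (E k.succ.succ) z) := by
      intro k
      have hEi : E k.succ.succ = {gfun P (k : ℕ)} := by
        rw [hE]; simp [Fin.val_succ]
      rw [hEi, tsProj_singleton_mem]
      have hg := tnormAux_single_ge (θ := θ) (S := S) m (gfun P (k : ℕ)) (z (gfun P (k : ℕ)))
      rwa [hzF _ k.isLt] at hg
    have hsum : |b p| + tnormAux θ S m (b.erase p) + (N + 1) * c
        ≤ ∑ i, tnormAux θ S m (tsProj (E i) z) := by
      rw [Fin.sum_univ_succ, Fin.sum_univ_succ]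
      have hs : (N + 1 : ℝ) * c
          ≤ ∑ k : Fin (N + 1), tnormAux θ S m (tsProj (E k.succ.succ) z) := by
        calc (N + 1 : ℝ) * c = ∑ _k : Fin (N + 1), c := by
              rw [Finset.sum_const, Finset.card_univ, Fintype.card_fin, nsmul_eq_mul]
              push_cast; ring
          _ ≤ _ := Finset.sum_le_sum fun k _ => h2v k
      linarith [h0v, le_of_eq h1v.symm, hs]
    have hle := le_tnormAux_succ (S := S) hθ0.le hθ1 m z hadm
    have hz' : θ * (|b p| + tnormAux θ S m (b.erase p) + (N + 1) * c) ≤ tnorm θ S z :=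
      le_trans (mul_le_mul_of_nonneg_left hsum hθ0.le)
        (le_trans hle (tnormAux_le_tnorm hθ0.le hθ1 _ z))
    have hone : θ * ((N + 1) * c) = 1 := by rw [← mul_assoc]; exact hc
    have hexp : θ * (|b p| + tnormAux θ S m (b.erase p) + (N + 1) * c)
        = θ * (|b p| + tnormAux θ S m (b.erase p)) + θ * ((N + 1) * c) := by ring
    linarith
  have hdiv : ∀ m : ℕ, tnormAux θ S m (b.erase p)
      ≤ (tnorm θ S z - θ * |b p| - 1) / θ := by
    intro m
    rw [le_div_iff₀ hθ0]
    have h1 := main m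
    have hexp : θ * (|b p| + tnormAux θ S m (b.erase p))
        = θ * |b p| + tnormAux θ S m (b.erase p) * θ := by ring
    linarith
  have hfin : tnorm θ S (b.erase p) ≤ (tnorm θ S z - θ * |b p| - 1) / θ :=
    ciSup_le hdiv
  rw [le_div_iff₀ hθ0] at hfin
  have hexp : θ * (|b p| + tnorm θ S (b.erase p))
      = θ * |b p| + tnorm θ S (b.erase p) * θ := by ring
  linarith


theorem main_thm

    (θ : ℝ) (hθ0 : 0 < θ) (hθ : θ ≤ 1 / 2) (n : ℕ) (hn : 2 ≤ n)
    (X : Type*) [NormedAddCommGroup X] [NormedSpace ℝ X] (e : ℕ+ → X)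
    (hX : IsTsirelsonSpace θ n X e)
    (v : X) (hv : ‖v‖ = 1) (a : ℕ+ → ℝ) (ha : HasSum (fun i => a i • e i) v)
    (h1 : a 1 = 0)
    (h : ∀ y : X, ‖y‖ = 1 → min ‖v + y‖ ‖v - y‖ ≤ θ * ((⌊θ⁻¹⌋₊ : ℝ) + 1)) :
    ∃ (m : ℕ+) (ε : ℝ), 1 < m ∧ (ε = 1 ∨ ε = -1) ∧ v = ε • e m := by
  classical
  have hθ1 : θ ≤ 1 := le_trans hθ (by norm_num)
  set S := Schreier n with hSdef
  set N := ⌊θ⁻¹⌋₊ with hNdef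
  have hθinv : (0 : ℝ) < θ⁻¹ := inv_pos.mpr hθ0
  have hN1 : θ * N ≤ 1 := by
    have hfl : (N : ℝ) ≤ θ⁻¹ := Nat.floor_le hθinv.le
    calc θ * N ≤ θ * θ⁻¹ := mul_le_mul_of_nonneg_left hfl hθ0.le
      _ = 1 := mul_inv_cancel₀ hθ0.ne'
  have hN2 : 1 < θ * (N + 1) := by
    have hfl : θ⁻¹ < (N : ℝ) + 1 := Nat.lt_floor_add_one θ⁻¹
    calc (1 : ℝ) = θ * θ⁻¹ := (mul_inv_cancel₀ hθ0.ne').symm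
      _ < θ * (N + 1) := mul_lt_mul_of_pos_left hfl hθ0
  set c : ℝ := (θ * (N + 1))⁻¹ with hcdef
  have hθN0 : (0 : ℝ) < θ * (N + 1) := lt_trans one_pos hN2
  have hc0 : 0 < c := inv_pos.mpr hθN0
  have hcc : θ * (N + 1) * c = 1 := mul_inv_cancel₀ hθN0.ne'
  have hc1 : c ≤ 1 := by
    rw [hcdef]
    exact inv_le_one_of_one_le₀ hN2.le
  have he : ∀ mm : ℕ+, ‖e mm‖ = 1 := by
    intro mm
    have h' := hX.norm_embed (Finsupp.single mm 1)
    rw [Finsupp.sum_single_index (by simp), one_smul] at h'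
    rw [h', tnorm_single hθ0.le hθ1]
    norm_num
  by_cases hone : ∀ i j : ℕ+, a i ≠ 0 → a j ≠ 0 → i = j
  · have hex : ∃ mm : ℕ+, a mm ≠ 0 := by
      by_contra hno
      push_neg at hno
      have hv0 : v = 0 := by
        have h0 : HasSum (fun i : ℕ+ => a i • e i) 0 := by
          have hz : (fun i : ℕ+ => a i • e i) = fun _ => 0 :=
            funext fun i => by rw [hno i, zero_smul]
          rw [hz]; exact hasSum_zero
        exact ha.unique h0
      rw [hv0, norm_zero] at hv; norm_num at hv
    obtain ⟨mm, hmm⟩ := hex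
    have hvm : v = a mm • e mm := by
      have h0 : HasSum (fun i : ℕ+ => a i • e i) (a mm • e mm) := by
        apply hasSum_single mm
        intro i hi
        by_cases hia : a i = 0
        · rw [hia, zero_smul]
        · exact absurd (hone i mm hia hmm) hi
      exact ha.unique h0
    have habs : |a mm| = 1 := by
      rw [hvm, norm_smul, he mm, mul_one, Real.norm_eq_abs] at hv
      exact hv
    have hm1 : 1 < mm := by
      rcases lt_or_ge 1 mm with h' | h'
      · exact h'
      · have : mm = 1 := le_antisymm h' mm.one_le
        subst this
        exact absurd h1 hmm
    rcases (abs_eq (by norm_num : (0:ℝ) ≤ 1)).mp habs with h' | h'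
    · exact ⟨mm, 1, hm1, Or.inl rfl, by rw [hvm, h']⟩
    · exact ⟨mm, -1, hm1, Or.inr rfl, by rw [hvm, h']⟩
  · exfalso
    push_neg at hone
    obtain ⟨i₀, j₀, hi₀, hj₀, hij₀⟩ := hone
    have hexn : ∃ k : ℕ, ∃ hk : 0 < k, a ⟨k, hk⟩ ≠ 0 := ⟨i₀.val, i₀.pos, hi₀⟩
    let k₀ := Nat.find hexn
    obtain ⟨hk₀pos, hk₀ne⟩ := Nat.find_spec hexn
    set p : ℕ+ := ⟨k₀, hk₀pos⟩ with hpdef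
    have hap : a p ≠ 0 := hk₀ne
    have hmin : ∀ i : ℕ+, i < p → a i = 0 := by
      intro i hi
      by_contra hne
      have hlt : i.val < k₀ := hi
      exact (Nat.find_min hexn hlt) ⟨i.pos, hne⟩
    -- pick q ≠ p with a q ≠ 0
    have hq : ∃ q : ℕ+, q ≠ p ∧ a q ≠ 0 := by
      by_cases hip : i₀ = p
      · exact ⟨j₀, fun hj => hij₀ (hip.trans hj.symm), hj₀⟩
      · exact ⟨i₀, hip, hi₀⟩
    obtain ⟨q, hqne, haq⟩ := hq
    have hpq : p < q := by
      have hle : p ≤ q := by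
        by_contra hlt
        push_neg at hlt
        exact haq (hmin q hlt)
      exact lt_of_le_of_ne hle (Ne.symm hqne)
    have hp2 : 2 ≤ (p : ℕ) := by
      have hne1 : p ≠ 1 := by
        intro hp1
        rw [hp1] at hap
        exact hap h1
      have : (p : ℕ) ≠ 1 := fun h' => hne1 (PNat.coe_injective h')
      have := p.pos
      omega
    set s := |a p| with hsdef
    have hs : 0 < s := abs_pos.mpr hap
    set sq := |a q| with hsqdef
    have hsq : 0 < sq := abs_pos.mpr haq
    set η := min sq (s / 2) with hηdef
    have hη : 0 < η := lt_min hsq (by linarith)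
    set ε := θ * η / 3 with hεdef
    have hε : 0 < ε := by positivity
    have hts := Metric.tendsto_atTop.mp ha ε hε
    obtain ⟨s₀, hs₀⟩ := hts
    set t := insert p (insert q s₀) with htdef
    have hst : s₀ ≤ t := Finset.le_iff_subset.mpr (by
      intro x hx
      simp [htdef, Finset.mem_insert, hx])
    have hpt : p ∈ t := by simp [htdef]
    have hqt : q ∈ t := by simp [htdef]
    have ht : dist (∑ i ∈ t, a i • e i) v < ε := hs₀ t hst
    set b : ℕ+ →₀ ℝ := Finsupp.onFinset t (fun i => if i ∈ t then a i else 0)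
      (fun i hi => by by_contra hh; simp [hh] at hi) with hbdef
    have hbap : ∀ i : ℕ+, b i = if i ∈ t then a i else 0 := fun i => rfl
    have hbp : b p = a p := by rw [hbap, if_pos hpt]
    have hbq : b q = a q := by rw [hbap, if_pos hqt]
    have hblow : ∀ i : ℕ+, i < p → b i = 0 := by
      intro i hi
      rw [hbap]
      split
      · exact hmin i hi
      · rfl
    set M : ℕ := max (t.sup fun i => (i : ℕ)) (N + 1) with hMdef
    set P : ℕ+ := ⟨M + 1, Nat.succ_pos M⟩ with hPdef
    have htP : ∀ i ∈ t, (i : ℕ) ≤ M :=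
      fun i hi => le_trans (Finset.le_sup (f := fun i : ℕ+ => (i : ℕ)) hi) (le_max_left _ _)
    have hPcoe : (P : ℕ) = M + 1 := rfl
    have hbhigh : ∀ i : ℕ+, P < i → b i = 0 := by
      intro i hi
      rw [hbap]
      split
      · next hit =>
        exfalso
        have h1' := htP i hit
        have h2' : (P : ℕ) < (i : ℕ) := (PNat.coe_lt_coe _ _).mpr hi
        omega
      · rfl
    have hqP : q ≤ P := by
      have := htP q hqt
      exact (PNat.coe_le_coe _ _).mp (by omega)
    have hPN : N + 1 ≤ (P : ℕ) := by
      rw [hPcoe]; omega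
    -- w and its closeness to v
    set w := b.sum fun i cc => cc • e i with hwdef
    have hw_eq : w = ∑ i ∈ t, a i • e i := by
      rw [hwdef, Finsupp.sum_of_support_subset b Finsupp.support_onFinset_subset _
        (fun i _ => zero_smul ℝ (e i))]
      exact Finset.sum_congr rfl fun i hi => by rw [hbap, if_pos hi]
    have hwv : ‖w - v‖ < ε := by
      rw [hw_eq, ← dist_eq_norm]
      exact ht
    have hnw : tnorm θ S b = ‖w‖ := (hX.norm_embed b).symm
    have hw1 : 1 - ε ≤ ‖w‖ := by
      have h1' : ‖v‖ - ‖w‖ ≤ ‖v - w‖ := norm_sub_norm_le v w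
      have h2' : ‖v - w‖ = ‖w - v‖ := norm_sub_rev v w
      rw [hv] at h1'
      linarith
    set tw := tnorm θ S (b.erase p) with htwdef
    have hkey : 1 + η - ε ≤ s + tw := by
      have hKb := tnorm_le_erase (S := S) hθ0.le hθ1 b p
      rw [hbp, ← hsdef] at hKb
      have h2' : 1 - ε ≤ max s (θ * s + tw) := by
        rw [← htwdef] at hKb
        calc 1 - ε ≤ ‖w‖ := hw1
          _ = tnorm θ S b := hnw.symm
          _ ≤ _ := hKb
      have htwq : sq ≤ tw := by
        have hq' : (b.erase p) q = a q := by
          rw [Finsupp.erase_ne hqne, hbq]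
        calc sq = |(b.erase p) q| := by rw [hq', hsqdef]
          _ ≤ tnormAux θ S 0 (b.erase p) := abs_le_tnormAux0 _ q
          _ ≤ tw := tnormAux_le_tnorm hθ0.le hθ1 0 _
      rcases max_cases s (θ * s + tw) with ⟨hmx, _⟩ | ⟨hmx, _⟩
      · rw [hmx] at h2'
        have hη1 : η ≤ sq := min_le_left _ _
        linarith
      · rw [hmx] at h2'
        have hη2 : η ≤ s / 2 := min_le_right _ _
        nlinarith [hs.le]
    -- the perturbation y
    set yhat := flatVec (Ffin P N) c with hyhatdef
    have hynorm : tnorm θ S yhat = 1 :=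
      tnorm_flat hθ0 hθ1 (by omega) P N hPN hc0.le hcc hc1
    set y := yhat.sum fun i cc => cc • e i with hydef
    have hy1 : ‖y‖ = 1 := by
      rw [hydef, hX.norm_embed]
      exact hynorm
    have hyhat_zero : ∀ i : ℕ+, i ≤ P → yhat i = 0 := by
      intro i hi
      rw [hyhatdef, flatVec_apply]
      split
      · next hiF =>
        exfalso
        rcases mem_Ffin.mp hiF with ⟨k, _, rfl⟩
        have := P_lt_gfun P k
        exact absurd hi (not_le.mpr this)
      · rfl
    have hbg : ∀ k : ℕ, b (gfun P k) = 0 := fun k => hbhigh _ (P_lt_gfun P k)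
    have hyg : ∀ k : ℕ, k < N + 1 → yhat (gfun P k) = c := by
      intro k hk
      rw [hyhatdef, flatVec_apply, if_pos (gfun_mem_Ffin hk)]
    -- lower bounds for both signs
    have hlow : ∀ z : ℕ+ →₀ ℝ, (∀ i : ℕ+, i ≤ P → z i = b i) →
        (∀ k : ℕ, k < N + 1 → |z (gfun P k)| = c) →
        θ * (s + tw) + 1 ≤ tnorm θ S z := by
      intro z hz hzF
      have := key_lower hθ0 hθ1 hn p q P N hpq hp2 hqP hPN hc0.le hcc b z
        hblow hbhigh hz hzF
      rw [hbp, ← hsdef, ← htwdef] at this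
      exact this
    have hzplus : θ * (s + tw) + 1 ≤ tnorm θ S (b + yhat) := by
      refine hlow _ (fun i hi => ?_) (fun k hk => ?_)
      · rw [Finsupp.add_apply, hyhat_zero i hi, add_zero]
      · rw [Finsupp.add_apply, hbg k, hyg k hk, zero_add, abs_of_nonneg hc0.le]
    have hzminus : θ * (s + tw) + 1 ≤ tnorm θ S (b - yhat) := by
      refine hlow _ (fun i hi => ?_) (fun k hk => ?_)
      · rw [Finsupp.sub_apply, hyhat_zero i hi, sub_zero]
      · rw [Finsupp.sub_apply, hbg k, hyg k hk, zero_sub, abs_neg, abs_of_nonneg hc0.le]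
    -- translate to X norms
    have hsum_plus : (b + yhat).sum (fun i cc => cc • e i) = w + y := by
      rw [Finsupp.sum_add_index' (fun i => zero_smul ℝ (e i))
        (fun i c₁ c₂ => add_smul c₁ c₂ (e i))]
    have hsum_minus : (b - yhat).sum (fun i cc => cc • e i) = w - y := by
      have hid : (b - yhat) + yhat = b := sub_add_cancel b yhat
      have hthis := Finsupp.sum_add_index' (f := b - yhat) (g := yhat)
        (h := fun i cc => cc • e i)
        (fun i => zero_smul ℝ (e i)) (fun i c₁ c₂ => add_smul c₁ c₂ (e i))
      rw [hid] at hthis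
      refine eq_sub_of_add_eq ?_
      rw [hwdef, hydef]
      exact hthis.symm
    have hvpy : θ * (s + tw) + 1 - ε ≤ ‖v + y‖ := by
      have h1' : ‖w + y‖ = tnorm θ S (b + yhat) := by
        rw [← hsum_plus]; exact hX.norm_embed _
      have h2' : ‖w + y‖ - ‖w - v‖ ≤ ‖v + y‖ := by
        have hrw : v + y = (w + y) - (w - v) := by abel
        rw [hrw]
        exact norm_sub_norm_le (w + y) (w - v)
      rw [h1'] at h2'
      linarith [hzplus, hwv]
    have hvmy : θ * (s + tw) + 1 - ε ≤ ‖v - y‖ := by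
      have h1' : ‖w - y‖ = tnorm θ S (b - yhat) := by
        rw [← hsum_minus]; exact hX.norm_embed _
      have h2' : ‖w - y‖ - ‖w - v‖ ≤ ‖v - y‖ := by
        have hrw : v - y = (w - y) - (w - v) := by abel
        rw [hrw]
        exact norm_sub_norm_le (w - y) (w - v)
      rw [h1'] at h2'
      linarith [hzminus, hwv]
    have hhy := h y hy1
    have hmin' : θ * (s + tw) + 1 - ε ≤ min ‖v + y‖ ‖v - y‖ := le_min hvpy hvmy
    have hb1 : θ * ((N : ℝ) + 1) ≤ 1 + θ := by
      rw [mul_add, mul_one]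
      linarith [hN1]
    have hkey' : θ * (1 + η - ε) ≤ θ * (s + tw) := mul_le_mul_of_nonneg_left hkey hθ0.le
    have hθη : 0 < θ * η := mul_pos hθ0 hη
    have hfin : ε * (1 + θ) < θ * η := by
      have h32 : 1 + θ ≤ 3 / 2 := by linarith
      have hA : θ * η * (1 + θ) ≤ θ * η * (3 / 2) := by
        refine mul_le_mul_of_nonneg_left h32 hθη.le
      have hexp3 : ε * (1 + θ) = θ * η * (1 + θ) / 3 := by rw [hεdef]; ring
      rw [hexp3]
      linarith [hθη]
    have hexp1 : θ * (1 + η - ε) = θ + θ * η - θ * ε := by ring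
    have hexp2 : ε * (1 + θ) = ε + θ * ε := by ring
    linarith [hmin', hhy, hb1, hkey', hfin]

end TsirelsonProof

/-- For `n ≥ 2`: if `v` in the unit sphere of `T[θ, S_n]` has first
coordinate `0` and `min(‖v + y‖, ‖v − y‖) ≤ θ(⌊θ⁻¹⌋ + 1)` for every `y` in the unit
sphere, then `v = ± e_m` for some `m > 1`. -/
theorem tsirelson_min_norm_small_char_Sn
    (θ : ℝ) (hθ0 : 0 < θ) (hθ : θ ≤ 1 / 2) (n : ℕ) (hn : 2 ≤ n)
    (X : Type*) [NormedAddCommGroup X] [NormedSpace ℝ X] (e : ℕ+ → X)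
    (hX : IsTsirelsonSpace θ n X e)
    (v : X) (hv : ‖v‖ = 1) (a : ℕ+ → ℝ) (ha : HasSum (fun i => a i • e i) v)
    (h1 : a 1 = 0)
    (h : ∀ y : X, ‖y‖ = 1 → min ‖v + y‖ ‖v - y‖ ≤ θ * ((⌊θ⁻¹⌋₊ : ℝ) + 1)) :
    ∃ (m : ℕ+) (ε : ℝ), 1 < m ∧ (ε = 1 ∨ ε = -1) ∧ v = ε • e m :=
  TsirelsonProof.main_thm θ hθ0 hθ n hn X e hX v hv a ha h1 h
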